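/- arXiv:math/0602452 — 7 statements merged into one kernel-verified Lean document; each statement's English description precedes it below -/
import Mathlib

section
/- Let H be a finite group, A a finite additive abelian group with gcd(|H|, |A|) = 1, and α : H → Aut(A) an action. Then the group homomorphism A → Der_α(H, A) sending a ∈ A to the principal crossed homomorphism h ↦ α(h)(a) − a is surjective, and its kernel is the fixed subgroup A^H = {a ∈ A : α(h)(a) = a for all h ∈ H}; consequently Der_α(H, A) ≅ A / A^H. -/
/-- For an action `α : H → Aut A` of a group `H` on an additive abelian group `A`,
`Der α` is the abelian group (under pointwise addition) of crossed homomorphisms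
`d : H → A`, i.e. maps satisfying `d (h₁ * h₂) = d h₁ + (α h₁).toAdd (d h₂)`. -/
def Der {H A : Type*} [Group H] [AddCommGroup A] (α : H →* Multiplicative (AddAut A)) :
    AddSubgroup (H → A) where
  carrier := {d | ∀ h₁ h₂ : H, d (h₁ * h₂) = d h₁ + (α h₁).toAdd (d h₂)}
  zero_mem' := by intro h₁ h₂; simp
  add_mem' := by
    intro d₁ d₂ hd₁ hd₂ h₁ h₂
    simp only [Pi.add_apply, hd₁ h₁ h₂, hd₂ h₁ h₂, map_add]
    abel
  neg_mem' := by
    intro d hd h₁ h₂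
    simp only [Pi.neg_apply, hd h₁ h₂, map_neg]
    abel

/-- The homomorphism `A → Der_α(H, A)` sending `a` to the principal crossed homomorphism
`h ↦ (α h).toAdd a - a`. -/
def principalDer {H A : Type*} [Group H] [AddCommGroup A] (α : H →* Multiplicative (AddAut A)) :
    A →+ Der α where
  toFun a := ⟨fun h => (α h).toAdd a - a, by
    intro h₁ h₂
    simp only [map_mul, toAdd_mul, AddAut.add_apply, map_sub]
    abel⟩
  map_zero' := by ext h; simp
  map_add' a b := by ext h; simp; abel

/-- The subgroup `A^H` of elements of `A` fixed by all of `H` under the action `α`. -/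
def fixedAddSubgroup {H A : Type*} [Group H] [AddCommGroup A] (α : H →* Multiplicative (AddAut A)) :
    AddSubgroup A where
  carrier := {a | ∀ h : H, (α h).toAdd a = a}
  zero_mem' := by intro h; simp
  add_mem' := by intro a b ha hb h; simp [ha h, hb h]
  neg_mem' := by intro a ha h; simp [ha h]

/-- If `H` and `A` are finite with coprime orders, the map sending `a ∈ A` to the principal
crossed homomorphism `h ↦ (α h).toAdd a - a` is a surjection `A → Der_α(H, A)` with kernel the fixed
subgroup `A^H`; consequently `Der_α(H, A) ≅ A / A^H`. -/
theorem principalDer_surjective_ker_fixed {H A : Type*} [Group H] [AddCommGroup A]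
    [Fintype H] [Fintype A] (hcop : Nat.Coprime (Fintype.card H) (Fintype.card A))
    (α : H →* Multiplicative (AddAut A)) :
    Function.Surjective (principalDer α) ∧
      (principalDer α).ker = fixedAddSubgroup α ∧
      Nonempty ((Der α) ≃+ A ⧸ fixedAddSubgroup α) := by

  have hker : (principalDer α).ker = fixedAddSubgroup α := by
    ext a
    simp only [AddMonoidHom.mem_ker]
    constructor
    · intro h0 h
      have := congrFun (congrArg Subtype.val h0) h
      simpa [principalDer, sub_eq_zero] using this
    · intro ha
      ext h
      simp [principalDer, ha h]
  have hcardA : ∀ a : A, (Fintype.card A : ℤ) • a = 0 := by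
    intro a
    rw [natCast_zsmul]
    exact card_nsmul_eq_zero
  have hsurj : Function.Surjective (principalDer α) := by
    obtain ⟨u, v, huv⟩ : ∃ u v : ℤ, u * (Fintype.card H : ℤ) + v * (Fintype.card A : ℤ) = 1 :=
      (Int.isCoprime_iff_gcd_eq_one.mpr (by simpa [Int.gcd_natCast_natCast] using hcop))
    rintro ⟨d, hd⟩
    set s : A := ∑ h : H, d h with hs
    have hsum : ∀ g : H, (Fintype.card H : ℤ) • d g = s - (α g).toAdd s := by
      intro g
      have h1 : ∑ h : H, d (g * h) = s :=
        Fintype.sum_equiv (Equiv.mulLeft g) _ _ (fun h => rfl)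
      have h2 : ∑ h : H, d (g * h) = (Fintype.card H) • d g + (α g).toAdd s := by
        simp only [hd g, Finset.sum_add_distrib, Finset.sum_const, Finset.card_univ, hs,
          map_sum]
      rw [h1] at h2
      rw [natCast_zsmul, eq_sub_iff_add_eq]
      exact h2.symm
    refine ⟨(-u) • s, ?_⟩
    ext g
    show (α g).toAdd ((-u) • s) - (-u) • s = d g
    have h3 : d g = (u * (Fintype.card H : ℤ) + v * (Fintype.card A : ℤ)) • d g := by
      rw [huv, one_zsmul]
    rw [add_zsmul, mul_zsmul, mul_zsmul, hcardA, smul_zero, add_zero, hsum g] at h3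
    rw [map_zsmul, h3, smul_sub, neg_smul, neg_smul, sub_neg_eq_add]
    abel
  exact ⟨hsurj, hker, ⟨((QuotientAddGroup.quotientKerEquivOfSurjective _ hsurj).symm.trans
    (QuotientAddGroup.quotientAddEquivOfEq hker))⟩⟩
end

section
/- For every n ≥ 1, the abelianization of T*ₙ is isomorphic to the cyclic group ℤ/3ⁿ. -/
/-- The quaternion group of order 8, with `i = a 1`, `j = xa 0`, `k = i * j = xa 3`. -/
abbrev Q8 := QuaternionGroup 2

/-- The underlying function of the automorphism of `Q₈` sending `i ↦ j`, `j ↦ k`, `k ↦ i`. -/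
def tauFun : Q8 → Q8
  | .a i => if i = 0 then .a 0 else if i = 1 then .xa 0 else if i = 2 then .a 2 else .xa 2
  | .xa i => if i = 0 then .xa 3 else if i = 1 then .a 3 else if i = 2 then .xa 1 else .a 1

/-- The inverse function, sending `i ↦ k`, `j ↦ i`, `k ↦ j`. -/
def tauInvFun : Q8 → Q8
  | .a i => if i = 0 then .a 0 else if i = 1 then .xa 3 else if i = 2 then .a 2 else .xa 1
  | .xa i => if i = 0 then .a 1 else if i = 1 then .xa 2 else if i = 2 then .a 3 else .xa 0

/-- The automorphism `τ` of `Q₈` with `τ i = j`, `τ j = k`, `τ k = i`. -/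
def tau : MulAut Q8 :=
  { toFun := tauFun
    invFun := tauInvFun
    left_inv := by decide
    right_inv := by decide
    map_mul' := by decide }

theorem tau_pow_three : tau ^ 3 = 1 :=
  DFunLike.ext _ _ (by decide)

/-- The action `α : ℤ/3 → Aut Q₈` sending the generator `1` of `ℤ/3` to `τ`. -/
def alphaQ8 : Multiplicative (ZMod 3) →* MulAut Q8 :=
  AddMonoidHom.toMultiplicativeLeft
    (ZMod.lift 3 ⟨zmultiplesHom (Additive (MulAut Q8)) (Additive.ofMul tau), by
      show ((3 : ℕ) : ℤ) • Additive.ofMul tau = 0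
      have h3 : tau ^ ((3 : ℕ) : ℤ) = 1 := by rw [zpow_natCast, tau_pow_three]
      rw [← ofMul_zpow, h3, ofMul_one]⟩)

/-- The reduction map `ℤ/3ⁿ → ℤ/3` (junk when `n = 0`). -/
def redMod3 (n : ℕ) : ZMod (3 ^ n) →+ ZMod 3 :=
  if h : n = 0 then 0
  else (ZMod.castHom (dvd_pow_self 3 h) (ZMod 3)).toAddMonoidHom

/-- The action `αₙ : ℤ/3ⁿ → Aut Q₈`, the composite of the reduction map `ℤ/3ⁿ → ℤ/3`
with `α`. -/
def alphaQ8n (n : ℕ) : Multiplicative (ZMod (3 ^ n)) →* MulAut Q8 :=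
  alphaQ8.comp (AddMonoidHom.toMultiplicative (redMod3 n))

/-- The generalized binary tetrahedral group `T*ₙ = Q₈ ⋊_{αₙ} ℤ/3ⁿ`. -/
abbrev Tstar (n : ℕ) := Q8 ⋊[alphaQ8n n] Multiplicative (ZMod (3 ^ n))

open SemidirectProduct in
lemma alphaQ8n_one (n : ℕ) (hn : n ≠ 0) :
    alphaQ8n n (Multiplicative.ofAdd (1 : ZMod (3^n))) = tau := by
  have h1 : redMod3 n 1 = 1 := by
    rw [redMod3, dif_neg hn]; exact (ZMod.castHom (dvd_pow_self 3 hn) (ZMod 3)).map_one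
  show alphaQ8 (Multiplicative.ofAdd (redMod3 n 1)) = tau
  rw [h1]
  have h2 : (1 : ZMod 3) = ((1 : ℤ) : ZMod 3) := by norm_cast
  simp only [alphaQ8, AddMonoidHom.toMultiplicativeLeft, MonoidHom.coe_mk, OneHom.coe_mk, h2,
    ZMod.lift_coe]
  rfl

open SemidirectProduct in
lemma of_inl_eq_one (n : ℕ) (hn : n ≠ 0) (q : Q8) :
    Abelianization.of (inl q : Tstar n) = 1 := by
  set g : Q8 →* Abelianization (Tstar n) := (Abelianization.of (G := Tstar n)).comp inl with hg
  show g q = 1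
  have hconj : ∀ p : Q8, g (tau p) = g p := by
    intro p
    have := inl_aut (φ := alphaQ8n n) (Multiplicative.ofAdd (1 : ZMod (3^n))) p
    rw [alphaQ8n_one n hn] at this
    have h2 := congrArg (Abelianization.of (G := Tstar n)) this
    simp only [map_mul, map_inv] at h2
    have h3 : g (tau p) = Abelianization.of (inl (tau p) : Tstar n) := rfl
    rw [h3, h2, mul_comm, inv_mul_cancel_left]
    rfl
  have hi : g (.xa 0) = g (.a 1) := hconj (.a 1)
  have hj : g (.xa 3) = g (.xa 0) := hconj (.xa 0)
  have hk : g (.xa 3) = g (.a 1) * g (.xa 0) := by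
    rw [← map_mul]; congr 1
  have ha1 : g (.a 1) = 1 := by
    have h4 := hk.symm.trans hj
    rw [hi] at h4
    exact mul_left_cancel (h4.trans (mul_one _).symm)
  have hxa0 : g (.xa 0) = 1 := hi.trans ha1
  have hrep : ∀ i : ZMod 4, (QuaternionGroup.a i : Q8) = (.a 1) ^ i.val ∧
      (QuaternionGroup.xa i : Q8) = (.a 1) ^ (-i).val * .xa 0 := by decide
  cases q with
  | a i => rw [(hrep i).1, map_pow, ha1, one_pow]
  | xa i => rw [(hrep i).2, map_mul, map_pow, ha1, one_pow, one_mul, hxa0]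

/-- For every n ≥ 1, the abelianization of T*ₙ is isomorphic to ℤ/3ⁿ. -/
theorem abelianization_Tstar (n : ℕ) (hn : 1 ≤ n) :
    Nonempty (Abelianization (Tstar n) ≃* Multiplicative (ZMod (3 ^ n))) := by
  have hn' : n ≠ 0 := by omega
  let f : Abelianization (Tstar n) →* Multiplicative (ZMod (3 ^ n)) :=
    Abelianization.lift SemidirectProduct.rightHom
  let g : Multiplicative (ZMod (3 ^ n)) →* Abelianization (Tstar n) :=
    (Abelianization.of).comp SemidirectProduct.inr
  refine ⟨MonoidHom.toMulEquiv f g ?_ ?_⟩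
  · apply Abelianization.hom_ext
    ext x
    show Abelianization.of (SemidirectProduct.inr (SemidirectProduct.rightHom x) : Tstar n)
      = Abelianization.of x
    conv_rhs => rw [← SemidirectProduct.inl_left_mul_inr_right x]
    rw [map_mul, of_inl_eq_one n hn', one_mul]
    rfl
  · ext t
    show SemidirectProduct.rightHom (SemidirectProduct.inr t : Tstar n) = t
    rfl
end

section
/- For every n ≥ 1, the center of T*ₙ is isomorphic to ℤ/2 × ℤ/3^(n−1). -/
lemma L1 (x : Multiplicative (ZMod 3)) (q : Q8) (h : q = .a 0 ∨ q = .a 2) :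
    alphaQ8 x q = q := by revert x q; decide

lemma L2 (x : Multiplicative (ZMod 3)) (h : alphaQ8 x (.a 1) = .a 1) : x = 1 := by
  revert x; decide

lemma L3 (q : Q8) (h : alphaQ8 (.ofAdd 1) q = q) : q = .a 0 ∨ q = .a 2 := by
  revert q; decide

lemma L4 (q q' : Q8) (h : q = .a 0 ∨ q = .a 2) : q * q' = q' * q := by
  revert q q'; decide

lemma alphaQ8n_apply (n : ℕ) (t : Multiplicative (ZMod (3 ^ n))) (q : Q8) :
    alphaQ8n n t q = alphaQ8 (.ofAdd (redMod3 n t.toAdd)) q := rfl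

lemma redMod3_apply (n : ℕ) (hn : n ≠ 0) (t : ZMod (3 ^ n)) :
    redMod3 n t = ((t.val : ℕ) : ZMod 3) := by
  simp only [redMod3, dif_neg hn]
  haveI : NeZero (3 ^ n) := ⟨pow_ne_zero n (by norm_num)⟩
  simp [ZMod.natCast_val]

def gmap (n : ℕ) : ZMod (3 ^ (n - 1)) →+ ZMod (3 ^ n) :=
  ZMod.lift _ ⟨zmultiplesHom _ (3 : ZMod (3 ^ n)), by
    show ((3 ^ (n - 1) : ℕ) : ℤ) • (3 : ZMod (3 ^ n)) = 0
    rcases Nat.eq_zero_or_pos n with h | h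
    · subst h
      decide
    · have : ((3 ^ (n - 1) : ℕ) : ℤ) • (3 : ZMod (3 ^ n)) = ((3 ^ (n - 1) * 3 : ℕ) : ZMod (3 ^ n)) := by
        rw [zsmul_eq_mul]; push_cast; ring
      rw [this, ← pow_succ, Nat.sub_add_cancel h, ZMod.natCast_self]⟩

lemma gmap_natCast (n : ℕ) (m : ℕ) :
    gmap n ((m : ℕ) : ZMod (3 ^ (n - 1))) = ((3 * m : ℕ) : ZMod (3 ^ n)) := by
  have : ((m : ℕ) : ZMod (3 ^ (n - 1))) = (((m : ℕ) : ℤ) : ZMod (3 ^ (n - 1))) := by push_cast; rfl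
  rw [this, gmap, ZMod.lift_coe]
  show ((m : ℕ) : ℤ) • (3 : ZMod (3 ^ n)) = _
  rw [zsmul_eq_mul]; push_cast; ring

lemma gmap_apply (n : ℕ) (y : ZMod (3 ^ (n - 1))) :
    gmap n y = ((3 * y.val : ℕ) : ZMod (3 ^ n)) := by
  haveI : NeZero (3 ^ (n - 1)) := ⟨pow_ne_zero _ (by norm_num)⟩
  conv_lhs => rw [show y = ((y.val : ℕ) : ZMod (3 ^ (n - 1))) by
    rw [ZMod.natCast_val, ZMod.cast_id]]
  exact gmap_natCast n y.val

lemma red_gmap (n : ℕ) (y : ZMod (3 ^ (n - 1))) : redMod3 n (gmap n y) = 0 := by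
  rcases Nat.eq_zero_or_pos n with h | h
  · subst h; simp [redMod3]
  · rw [gmap_apply]
    have : redMod3 n ((3 * y.val : ℕ) : ZMod (3 ^ n)) = ((3 * y.val : ℕ) : ZMod 3) := by
      simp only [redMod3, dif_neg h.ne']
      exact map_natCast (ZMod.castHom (dvd_pow_self 3 h.ne') (ZMod 3)) _
    rw [this]
    exact (ZMod.natCast_eq_zero_iff _ _).mpr ⟨y.val, rfl⟩

def e2 : Multiplicative (ZMod 2) → Q8 := fun x => if x = 1 then 1 else .a 2

lemma e2_mul (x y : Multiplicative (ZMod 2)) : e2 (x * y) = e2 x * e2 y := by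
  revert x y; decide

lemma e2_mem (x : Multiplicative (ZMod 2)) : e2 x = .a 0 ∨ e2 x = .a 2 := by
  revert x; decide

lemma e2_eq_one (x : Multiplicative (ZMod 2)) (h : e2 x = 1) : x = 1 := by
  revert x; decide

/-- The homomorphism from `ℤ/2 × ℤ/3^(n-1)` to `T*ₙ`. -/
def Phi (n : ℕ) :
    Multiplicative (ZMod 2) × Multiplicative (ZMod (3 ^ (n - 1))) →* Tstar n where
  toFun p := ⟨e2 p.1, Multiplicative.ofAdd (gmap n p.2.toAdd)⟩
  map_one' := by
    refine SemidirectProduct.ext ?_ ?_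
    · show e2 1 = 1; decide
    · show Multiplicative.ofAdd (gmap n 0) = 1
      simp
  map_mul' p q := by
    refine SemidirectProduct.ext ?_ ?_
    · show e2 (p.1 * q.1) = e2 p.1 * alphaQ8n n _ (e2 q.1)
      rw [alphaQ8n_apply, L1 _ _ (e2_mem q.1), e2_mul]
    · show Multiplicative.ofAdd (gmap n (p.2.toAdd + q.2.toAdd)) = _
      rw [map_add, ofAdd_add]
      rfl

lemma Phi_mem_center (n : ℕ) (p : Multiplicative (ZMod 2) × Multiplicative (ZMod (3 ^ (n - 1)))) :
    Phi n p ∈ Subgroup.center (Tstar n) := by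
  rw [Subgroup.mem_center_iff]
  intro g
  refine SemidirectProduct.ext ?_ ?_
  · show g.left * alphaQ8n n g.right (e2 p.1) = e2 p.1 * alphaQ8n n _ g.left
    rw [alphaQ8n_apply, L1 _ _ (e2_mem p.1)]
    rw [alphaQ8n_apply]
    show g.left * e2 p.1 = e2 p.1 * alphaQ8 (.ofAdd (redMod3 n (gmap n p.2.toAdd))) g.left
    rw [red_gmap]
    show g.left * e2 p.1 = e2 p.1 * alphaQ8 1 g.left
    rw [map_one]
    show g.left * e2 p.1 = e2 p.1 * g.left
    exact (L4 _ _ (e2_mem p.1)).symm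
  · exact mul_comm _ _

/-- For every n ≥ 1, the center of T*ₙ is isomorphic to ℤ/2 × ℤ/3^(n-1). -/
theorem center_Tstar (n : ℕ) (hn : 1 ≤ n) :
    Nonempty ((Subgroup.center (Tstar n)) ≃*
      Multiplicative (ZMod 2) × Multiplicative (ZMod (3 ^ (n - 1)))) := by
  haveI : NeZero (3 ^ n) := ⟨pow_ne_zero _ (by norm_num)⟩
  haveI : NeZero (3 ^ (n - 1)) := ⟨pow_ne_zero _ (by norm_num)⟩
  have hn0 : n ≠ 0 := by omega
  set Φ := (Phi n).codRestrict (Subgroup.center (Tstar n)) (Phi_mem_center n) with hΦ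
  have hinj : Function.Injective Φ := by
    intro p q hpq
    have h1 : Phi n p = Phi n q := congrArg Subtype.val hpq
    have hl : e2 p.1 = e2 q.1 := congrArg SemidirectProduct.left h1
    have hr : gmap n p.2.toAdd = gmap n q.2.toAdd := by
      have := congrArg SemidirectProduct.right h1
      exact congrArg Multiplicative.toAdd this
    have hgi : Function.Injective (gmap n) := by
      intro a b hab
      have h0 : gmap n (a - b) = 0 := by rw [map_sub, hab, sub_self]
      rw [gmap_apply] at h0
      have hdvd : 3 ^ n ∣ 3 * (a - b).val := (ZMod.natCast_eq_zero_iff _ _).mp h0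
      have h3n : 3 ^ n = 3 * 3 ^ (n - 1) := by
        rw [← pow_succ']
        congr 1
        omega
      rw [h3n] at hdvd
      have hdvd' : 3 ^ (n - 1) ∣ (a - b).val := by
        rcases hdvd with ⟨c, hc⟩
        exact ⟨c, Nat.eq_of_mul_eq_mul_left (show 0 < 3 by norm_num) (by rw [hc, mul_assoc])⟩
      have : (a - b).val = 0 := Nat.eq_zero_of_dvd_of_lt hdvd' ((a - b).val_lt)
      have : a - b = 0 := by
        rwa [ZMod.val_eq_zero] at this
      exact sub_eq_zero.mp this
    have he2 : Function.Injective e2 := by decide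
    exact Prod.ext (he2 hl) (by
      have := hgi hr
      exact Multiplicative.toAdd.injective this)
  have hsurj : Function.Surjective Φ := by
    rintro ⟨z, hz⟩
    have hz' := Subgroup.mem_center_iff.mp hz
    obtain ⟨q, t⟩ := z
    -- commuting with ⟨1, ofAdd 1⟩ shows q is fixed by τ
    have h1 := hz' ⟨1, Multiplicative.ofAdd 1⟩
    have h1l := congrArg SemidirectProduct.left h1
    simp only [SemidirectProduct.mul_left, one_mul, map_one, MulAut.one_apply, mul_one] at h1l
    -- h1l : alphaQ8n n (ofAdd 1) q = q
    rw [alphaQ8n_apply] at h1l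
    have hred1 : redMod3 n (Multiplicative.toAdd (Multiplicative.ofAdd (1 : ZMod (3 ^ n)))) = 1 := by
      rw [toAdd_ofAdd, redMod3_apply n hn0, ZMod.val_one_eq_one_mod]
      have : (1 : ℕ) % 3 ^ n = 1 := Nat.mod_eq_of_lt (by
        have : 3 ^ 1 ≤ 3 ^ n := Nat.pow_le_pow_right (by norm_num) hn
        omega)
      rw [this]; norm_num
    rw [hred1] at h1l
    have hq : q = .a 0 ∨ q = .a 2 := L3 q h1l
    -- commuting with ⟨i, 1⟩ shows red t = 0
    have h2 := hz' ⟨.a 1, 1⟩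
    have h2l := congrArg SemidirectProduct.left h2
    simp only [SemidirectProduct.mul_left, map_one, MulAut.one_apply] at h2l
    -- h2l : .a 1 * q = q * alphaQ8n n t (.a 1)
    rw [L4 _ _ hq] at h2l
    have h2l' : alphaQ8n n t (QuaternionGroup.a 1) = QuaternionGroup.a 1 :=
      (mul_right_cancel h2l).symm
    rw [alphaQ8n_apply] at h2l'
    have hredt : redMod3 n t.toAdd = 0 := by
      have := L2 _ h2l'
      have := congrArg Multiplicative.toAdd this
      simpa using this
    rw [redMod3_apply n hn0] at hredt
    have hdvd : 3 ∣ (t.toAdd).val := (ZMod.natCast_eq_zero_iff _ _).mp hredt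
    obtain ⟨m, hm⟩ := hdvd
    refine ⟨⟨if q = .a 0 then 1 else Multiplicative.ofAdd 1,
      Multiplicative.ofAdd ((m : ZMod (3 ^ (n - 1))))⟩, ?_⟩
    apply Subtype.ext
    show Phi n _ = ⟨q, t⟩
    refine SemidirectProduct.ext ?_ ?_
    · show e2 (if q = .a 0 then 1 else Multiplicative.ofAdd 1) = q
      rcases hq with h | h <;> subst h <;> decide
    · show Multiplicative.ofAdd (gmap n ((m : ZMod (3 ^ (n - 1))))) = t
      rw [gmap_natCast, ← hm]
      show Multiplicative.ofAdd (((t.toAdd).val : ZMod (3 ^ n))) = t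
      rw [ZMod.natCast_val, ZMod.cast_id]
      exact ofAdd_toAdd t
  exact ⟨(MulEquiv.ofBijective Φ ⟨hinj, hsurj⟩).symm⟩
end

section
/- For every n ≥ 1, the abelianization of O*ₙ is isomorphic to the cyclic group ℤ/2. -/
/-- Generators `X, P, Q, R` of the generalized binary octahedral group. -/
inductive OGen : Type
  | X : OGen
  | P : OGen
  | Q : OGen
  | R : OGen
  deriving DecidableEq

open OGen FreeGroup in
/-- The relations of the generalized binary octahedral group `O*ₙ`:
`X^(3^n) = P⁴ = 1`, `P² = Q² = R²`, `PQP⁻¹ = Q⁻¹`, `XPX⁻¹ = Q`, `XQX⁻¹ = PQ`,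
`RXR⁻¹ = X⁻¹`, `RPR⁻¹ = QP`, `RQR⁻¹ = Q⁻¹`. -/
def ostarRels (n : ℕ) : Set (FreeGroup OGen) :=
  { of X ^ 3 ^ n,
    of P ^ 4,
    of P ^ 2 * (of Q ^ 2)⁻¹,
    of Q ^ 2 * (of R ^ 2)⁻¹,
    of P * of Q * (of P)⁻¹ * of Q,
    of X * of P * (of X)⁻¹ * (of Q)⁻¹,
    of X * of Q * (of X)⁻¹ * (of P * of Q)⁻¹,
    of R * of X * (of R)⁻¹ * of X,
    of R * of P * (of R)⁻¹ * (of Q * of P)⁻¹,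
    of R * of Q * (of R)⁻¹ * of Q }

/-- The generalized binary octahedral group `O*ₙ`, given by the presentation above. -/
abbrev Ostar (n : ℕ) := PresentedGroup (ostarRels n)

open OGen FreeGroup

/-- The map of generators to `ZMod 2`. -/
def fgen : OGen → Multiplicative (ZMod 2)
  | OGen.R => Multiplicative.ofAdd 1
  | _ => 1

lemma fgen_rels (n : ℕ) : ∀ r ∈ ostarRels n, FreeGroup.lift fgen r = 1 := by
  intro r hr
  simp only [ostarRels, Set.mem_insert_iff, Set.mem_singleton_iff] at hr
  rcases hr with h|h|h|h|h|h|h|h|h|h <;> subst h <;>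
    simp [fgen] <;> decide

/-- For every n ≥ 1, the abelianization of O*ₙ is isomorphic to ℤ/2. -/
theorem abelianization_Ostar (n : ℕ) (hn : 1 ≤ n) :
    Nonempty (Abelianization (Ostar n) ≃* Multiplicative (ZMod 2)) := by
  classical
  set A := Abelianization (Ostar n) with hA
  -- the projection from the free group to the abelianization
  let π : FreeGroup OGen →* A :=
    Abelianization.of.comp (QuotientGroup.mk' (Subgroup.normalClosure (ostarRels n)))
  have hπof : ∀ g : OGen, π (of g) = Abelianization.of (PresentedGroup.of g) :=
    fun g => rfl
  have hπ : ∀ w ∈ ostarRels n, π w = 1 := by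
    intro w hw
    have h1 : (QuotientGroup.mk w :
        FreeGroup OGen ⧸ Subgroup.normalClosure (ostarRels n)) = 1 :=
      (QuotientGroup.eq_one_iff w).mpr (Subgroup.subset_normalClosure hw)
    show Abelianization.of (QuotientGroup.mk' (Subgroup.normalClosure (ostarRels n)) w) = 1
    rw [QuotientGroup.mk'_apply, h1, _root_.map_one]
  set x := π (of X) with hx
  set p := π (of P) with hp
  set q := π (of Q) with hq
  set r := π (of R) with hr
  have m1 : of X ^ 3 ^ n ∈ ostarRels n := Set.mem_insert _ _
  have m4 : of Q ^ 2 * (of R ^ 2)⁻¹ ∈ ostarRels n := Set.mem_insert_of_mem _ (Set.mem_insert_of_mem _ (Set.mem_insert_of_mem _ (Set.mem_insert _ _)))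
  have m5 : of P * of Q * (of P)⁻¹ * of Q ∈ ostarRels n := Set.mem_insert_of_mem _ (Set.mem_insert_of_mem _ (Set.mem_insert_of_mem _ (Set.mem_insert_of_mem _ (Set.mem_insert _ _))))
  have m6 : of X * of P * (of X)⁻¹ * (of Q)⁻¹ ∈ ostarRels n := Set.mem_insert_of_mem _ (Set.mem_insert_of_mem _ (Set.mem_insert_of_mem _ (Set.mem_insert_of_mem _ (Set.mem_insert_of_mem _ (Set.mem_insert _ _)))))
  have m7 : of X * of Q * (of X)⁻¹ * (of P * of Q)⁻¹ ∈ ostarRels n := Set.mem_insert_of_mem _ (Set.mem_insert_of_mem _ (Set.mem_insert_of_mem _ (Set.mem_insert_of_mem _ (Set.mem_insert_of_mem _ (Set.mem_insert_of_mem _ (Set.mem_insert _ _))))))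
  have m8 : of R * of X * (of R)⁻¹ * of X ∈ ostarRels n := Set.mem_insert_of_mem _ (Set.mem_insert_of_mem _ (Set.mem_insert_of_mem _ (Set.mem_insert_of_mem _ (Set.mem_insert_of_mem _ (Set.mem_insert_of_mem _ (Set.mem_insert_of_mem _ (Set.mem_insert _ _)))))))
  -- q * q = 1
  have hq2 : q * q = 1 := by
    have h := hπ _ m5
    simp only [_root_.map_mul, _root_.map_inv, ← hx, ← hp, ← hq] at h
    rwa [mul_inv_cancel_comm] at h
  -- p = q
  have hpq : p = q := by
    have h := hπ _ m6
    simp only [_root_.map_mul, _root_.map_inv, ← hx, ← hp, ← hq] at h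
    rw [mul_inv_cancel_comm] at h
    exact mul_inv_eq_one.mp h
  -- p = 1
  have hp1 : p = 1 := by
    have h := hπ _ m7
    simp only [_root_.map_mul, _root_.map_inv, ← hx, ← hp, ← hq] at h
    rw [mul_inv_cancel_comm] at h
    have : q = p * q := (mul_inv_eq_one.mp h)
    exact (right_eq_mul.mp this)
  have hq1 : q = 1 := hpq ▸ hp1
  -- r * r = 1
  have hr2 : r * r = 1 := by
    have h := hπ _ m4
    simp only [_root_.map_mul, _root_.map_inv, _root_.map_pow, ← hq, ← hr] at h
    have h2 : r ^ 2 = q ^ 2 := (mul_inv_eq_one.mp h).symm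
    rw [← pow_two, h2, pow_two, hq1, one_mul]
  -- x = 1
  have hx1 : x = 1 := by
    have hxx : x * x = 1 := by
      have h := hπ _ m8
      simp only [_root_.map_mul, _root_.map_inv, ← hx, ← hr] at h
      rwa [mul_inv_cancel_comm] at h
    have h2 : x ^ 2 = 1 := by rw [sq]; exact hxx
    have h1 : x ^ 3 ^ n = 1 := by
      have h := hπ _ m1
      simpa only [_root_.map_pow, ← hx] using h
    have hodd : Odd (3 ^ n) := Odd.pow (by decide : Odd 3)
    obtain ⟨k, hk⟩ := hodd
    calc x = x ^ (2 * k + 1) := by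
            rw [pow_succ, pow_mul, h2, one_pow, one_mul]
      _ = x ^ 3 ^ n := by rw [hk]
      _ = 1 := h1
  -- the homomorphism to ZMod 2
  let φh : Ostar n →* Multiplicative (ZMod 2) := PresentedGroup.toGroup (fgen_rels n)
  let φ : A →* Multiplicative (ZMod 2) := Abelianization.lift φh
  -- the homomorphism back
  have hrpow : r ^ (2 : ℤ) = 1 := by rw [zpow_two, hr2]
  have hr2' : (zmultiplesHom (Additive A) (Additive.ofMul r)) ((2 : ℕ) : ℤ) = 0 := by
    have : ((2 : ℕ) : ℤ) = (2 : ℤ) := rfl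
    rw [zmultiplesHom_apply, this, ← ofMul_zpow, hrpow, ofMul_one]
  let ψ : Multiplicative (ZMod 2) →* A :=
    AddMonoidHom.toMultiplicativeLeft
      (ZMod.lift 2 ⟨zmultiplesHom (Additive A) (Additive.ofMul r), hr2'⟩)
  have hψ1 : ψ (Multiplicative.ofAdd (1 : ZMod 2)) = r := by
    have h1 : (1 : ZMod 2) = ((1 : ℤ) : ZMod 2) := by decide
    simp only [ψ, AddMonoidHom.coe_toMultiplicativeLeft, Function.comp_apply, toAdd_ofAdd, h1,
      ZMod.lift_coe, zmultiplesHom_apply, one_zsmul, toMul_ofMul]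
  have hφr : φ r = Multiplicative.ofAdd (1 : ZMod 2) := by
    rw [hr, hπof]
    show φh (PresentedGroup.of OGen.R) = _
    rw [PresentedGroup.toGroup.of]
    rfl
  have key : ψ.comp φ = MonoidHom.id A := by
    apply Abelianization.hom_ext
    apply PresentedGroup.ext
    intro g
    simp only [MonoidHom.comp_apply, MonoidHom.id_apply]
    have : φ (Abelianization.of (PresentedGroup.of g)) = fgen g := by
      show φh (PresentedGroup.of g) = fgen g
      rw [PresentedGroup.toGroup.of]
    rw [this]
    cases g
    · show ψ 1 = _; rw [_root_.map_one, ← hπof, ← hx, hx1, MonoidHom.id_apply]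
    · show ψ 1 = _; rw [_root_.map_one, ← hπof, ← hp, hp1, MonoidHom.id_apply]
    · show ψ 1 = _; rw [_root_.map_one, ← hπof, ← hq, hq1, MonoidHom.id_apply]
    · show ψ (Multiplicative.ofAdd 1) = _; rw [hψ1, hr, hπof, MonoidHom.id_apply]
  refine ⟨{ toFun := φ, invFun := ψ, map_mul' := map_mul φ, left_inv := ?_, right_inv := ?_ }⟩
  · intro a
    exact DFunLike.congr_fun key a
  · intro z
    rcases (by decide : ∀ z : Multiplicative (ZMod 2),
        z = 1 ∨ z = Multiplicative.ofAdd 1) z with h | h <;> subst h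
    · rw [_root_.map_one, _root_.map_one]
    · rw [hψ1, hφr]
end

section
/- For every n ≥ 1, the center of O*ₙ is isomorphic to the cyclic group ℤ/2. -/
namespace OstarProof
open OGen
variable {n : ℕ}

def gx (n : ℕ) : Ostar n := PresentedGroup.of X
def gp (n : ℕ) : Ostar n := PresentedGroup.of P
def gq (n : ℕ) : Ostar n := PresentedGroup.of Q
def gr (n : ℕ) : Ostar n := PresentedGroup.of R

local notation "x" => gx n
local notation "p" => gp n
local notation "q" => gq n
local notation "r" => gr n
local notation "z" => gp n * gp n

lemma relw {w : FreeGroup OGen} (h : w ∈ ostarRels n) :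
    PresentedGroup.mk (ostarRels n) w = 1 :=
  (QuotientGroup.eq_one_iff _).2 (Subgroup.subset_normalClosure h)

lemma E1 : x ^ (3 ^ n) = 1 := by
  have h := relw (n := n) (w := FreeGroup.of X ^ 3 ^ n) (by simp [ostarRels])
  rw [map_pow] at h
  exact h

lemma E2 : p ^ 4 = 1 := by
  have h := relw (n := n) (w := FreeGroup.of P ^ 4) (by simp [ostarRels])
  rw [map_pow] at h
  exact h

lemma E3 : p ^ 2 = q ^ 2 := by
  have := relw (n := n) (w := FreeGroup.of P ^ 2 * (FreeGroup.of Q ^ 2)⁻¹) (by simp [ostarRels])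
  simp only [map_mul, map_pow, map_inv] at this
  exact mul_inv_eq_one.mp this

lemma E4 : q ^ 2 = r ^ 2 := by
  have := relw (n := n) (w := FreeGroup.of Q ^ 2 * (FreeGroup.of R ^ 2)⁻¹) (by simp [ostarRels])
  simp only [map_mul, map_pow, map_inv] at this
  exact mul_inv_eq_one.mp this

lemma E5 : p * q * p⁻¹ = q⁻¹ := by
  have := relw (n := n) (w := FreeGroup.of P * FreeGroup.of Q * (FreeGroup.of P)⁻¹ * FreeGroup.of Q)
    (by simp [ostarRels])
  simp only [map_mul, map_inv] at this
  exact eq_inv_of_mul_eq_one_left this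

lemma E6 : x * p * x⁻¹ = q := by
  have := relw (n := n) (w := FreeGroup.of X * FreeGroup.of P * (FreeGroup.of X)⁻¹ * (FreeGroup.of Q)⁻¹)
    (by simp [ostarRels])
  simp only [map_mul, map_inv] at this
  have h := eq_inv_of_mul_eq_one_left this
  rw [inv_inv] at h
  exact h

lemma E7 : x * q * x⁻¹ = p * q := by
  have := relw (n := n)
    (w := FreeGroup.of X * FreeGroup.of Q * (FreeGroup.of X)⁻¹ * (FreeGroup.of P * FreeGroup.of Q)⁻¹)
    (by simp [ostarRels])
  simp only [map_mul, map_inv] at this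
  have h := eq_inv_of_mul_eq_one_left this
  rw [inv_inv] at h
  exact h

lemma E8 : r * x * r⁻¹ = x⁻¹ := by
  have := relw (n := n) (w := FreeGroup.of R * FreeGroup.of X * (FreeGroup.of R)⁻¹ * FreeGroup.of X)
    (by simp [ostarRels])
  simp only [map_mul, map_inv] at this
  exact eq_inv_of_mul_eq_one_left this

lemma E9 : r * p * r⁻¹ = q * p := by
  have := relw (n := n)
    (w := FreeGroup.of R * FreeGroup.of P * (FreeGroup.of R)⁻¹ * (FreeGroup.of Q * FreeGroup.of P)⁻¹)
    (by simp [ostarRels])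
  simp only [map_mul, map_inv] at this
  have h := eq_inv_of_mul_eq_one_left this
  rw [inv_inv] at h
  exact h

lemma E10 : r * q * r⁻¹ = q⁻¹ := by
  have := relw (n := n) (w := FreeGroup.of R * FreeGroup.of Q * (FreeGroup.of R)⁻¹ * FreeGroup.of Q)
    (by simp [ostarRels])
  simp only [map_mul, map_inv] at this
  exact eq_inv_of_mul_eq_one_left this

/-! derived identities -/

lemma p4 : p * (p * (p * p)) = 1 := by
  have h := E2 (n := n)
  rwa [pow_succ, pow_succ, pow_two, mul_assoc, mul_assoc] at h

lemma qq : q * q = z := by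
  have h := (E3 (n := n)).symm
  rwa [pow_two, pow_two] at h

lemma rr : r * r = z := by
  have h := ((E3 (n := n)).trans (E4 (n := n))).symm
  rwa [pow_two, pow_two] at h

lemma zz : (z) * (z) = 1 := by
  have h := p4 (n := n)
  rwa [← mul_assoc] at h

lemma q4 : q * (q * (q * q)) = 1 := by
  have h := E2 (n := n)
  rw [show (4:ℕ) = 2*2 from rfl, pow_mul, E3, ← pow_mul] at h
  rwa [pow_succ, pow_succ, pow_two, mul_assoc, mul_assoc] at h

lemma r4 : r * (r * (r * r)) = 1 := by
  have h := E2 (n := n)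
  rw [show (4:ℕ) = 2*2 from rfl, pow_mul, E3, E4, ← pow_mul] at h
  rwa [pow_succ, pow_succ, pow_two, mul_assoc, mul_assoc] at h

lemma qinv : q⁻¹ = q * (z) := by
  refine inv_eq_of_mul_eq_one_right ?_
  rw [← qq, ← mul_assoc, ← mul_assoc]
  have h := q4 (n := n)
  rwa [← mul_assoc, ← mul_assoc] at h

lemma pinv : p⁻¹ = p * (z) := by
  refine inv_eq_of_mul_eq_one_right ?_
  have h := p4 (n := n)
  rwa [← mul_assoc, ← mul_assoc] at h

lemma rinv : r⁻¹ = r * (z) := by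
  refine inv_eq_of_mul_eq_one_right ?_
  rw [← rr, ← mul_assoc, ← mul_assoc]
  have h := r4 (n := n)
  rwa [← mul_assoc, ← mul_assoc] at h

lemma qp : q * p = p * (q * (z)) := by
  have h0 := E5 (n := n)
  have h2 := congrArg Inv.inv h0
  rw [inv_inv, mul_inv_rev, mul_inv_rev, inv_inv] at h2
  -- h2 : p * (q⁻¹ * p⁻¹) = q
  have h3 : p * q⁻¹ = q * p := by
    rw [← mul_assoc] at h2
    exact mul_inv_eq_iff_eq_mul.mp h2
  rw [← h3, qinv]

lemma zq : (z) * q = q * (z) := by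
  rw [← qq]; group

lemma zr : (z) * r = r * (z) := by
  rw [← rr]; group

lemma zx : (z) * x = x * (z) := by
  have h : x * (z) * x⁻¹ = q * q := by rw [← E6]; group
  rw [qq] at h
  exact (mul_inv_eq_iff_eq_mul.mp h).symm

lemma qx : q * x = x * p := by
  rw [← E6]; group

lemma px : p * x = x * (p * q) := by
  have h : x * (p * q) * x⁻¹ = p := by
    have e : x * (p*q) * x⁻¹ = (x*p*x⁻¹) * (x*q*x⁻¹) := by group
    rw [e, E6, E7]
    calc q * (p * q) = (q * p) * q := (mul_assoc _ _ _).symm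
    _ = (p * (q * (z))) * q := by rw [qp]
    _ = p * (q * ((z) * q)) := by simp only [mul_assoc]
    _ = p * (q * (q * (z))) := by rw [zq]
    _ = p * ((q * q) * (z)) := by simp only [mul_assoc]
    _ = p * ((z) * (z)) := by rw [qq]
    _ = p := by rw [zz, mul_one]
  conv_lhs => rw [← h]
  group

lemma rq : r * q = q * ((z) * r) := by
  have h : r * q = q⁻¹ * r := by rw [← E10]; group
  rw [h, qinv]; group

lemma rp : r * p = p * (q * ((z) * r)) := by
  have h : r * p = (q * p) * r := by rw [← E9]; group
  rw [h, qp]; group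

/-! x-power lemmas -/

lemma xinv : x⁻¹ = x ^ (3^n - 1) := by
  refine inv_eq_of_mul_eq_one_right ?_
  rw [← pow_succ', Nat.sub_add_cancel (Nat.one_le_pow _ _ (by norm_num))]
  exact E1

lemma pxm : p * x ^ (3^n - 1) = x ^ (3^n - 1) * q := by
  rw [← xinv, ← E6]; group

lemma qxm : q * x ^ (3^n - 1) = x ^ (3^n - 1) * (p * q) := by
  rw [← xinv, ← E7]; group

lemma rx : r * x = x ^ (3^n - 1) * r := by
  rw [← xinv, ← E8]; group

lemma zxm : (z) * x ^ (3^n - 1) = x ^ (3^n - 1) * (z) := by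
  rw [← xinv]
  have h := zx (n := n)
  calc (z) * x⁻¹ = x⁻¹ * (x * (z) * x⁻¹) := by group
  _ = x⁻¹ * ((z) * x * x⁻¹) := by rw [← zx]
  _ = x⁻¹ * (z) := by group

/-! normal form -/

def Zc (n : ℕ) : Ostar n := gp n * gp n

lemma Zdef : Zc n = gp n * gp n := rfl

-- atomic-Z versions of the rules
lemma Rpp : p * p = Zc n := rfl
lemma Rqq : q * q = Zc n := qq
lemma Rrr : r * r = Zc n := rr
lemma RZZ : Zc n * Zc n = 1 := zz
lemma Rqp : q * p = p * (q * Zc n) := qp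
lemma RZp : Zc n * p = p * Zc n := by rw [Zdef]; group
lemma RZq : Zc n * q = q * Zc n := zq
lemma RrZ : r * Zc n = Zc n * r := zr.symm
lemma Rrq : r * q = q * (Zc n * r) := rq
lemma Rrp : r * p = p * (q * (Zc n * r)) := rp
lemma Rpx : p * x = x * (p * q) := px
lemma Rqx : q * x = x * p := qx
lemma RZx : Zc n * x = x * Zc n := zx
lemma Rrx : r * x = x ^ (3^n - 1) * r := rx
lemma Rpxm : p * x ^ (3^n - 1) = x ^ (3^n - 1) * q := pxm
lemma Rqxm : q * x ^ (3^n - 1) = x ^ (3^n - 1) * (p * q) := qxm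
lemma RZxm : Zc n * x ^ (3^n - 1) = x ^ (3^n - 1) * Zc n := zxm
lemma Rxk (k : ℕ) : x ^ k * x = x ^ (k+1) := (pow_succ _ _).symm
lemma Rxkj (k j : ℕ) : x ^ k * x ^ j = x ^ (k+j) := (pow_add _ _ _).symm

section Wforms
variable {G : Type*} [Group G]
private lemma mw {a b c : G} (h : a * b = c) (w : G) : a * (b * w) = c * w := by
  rw [← mul_assoc, h]
end Wforms

lemma Wpp (w) : p * (p * w) = Zc n * w := mw Rpp w
lemma Wqq (w) : q * (q * w) = Zc n * w := mw Rqq w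
lemma Wrr (w) : r * (r * w) = Zc n * w := mw Rrr w
lemma WZZ (w) : Zc n * (Zc n * w) = 1 * w := mw RZZ w
lemma Wqp (w) : q * (p * w) = (p * (q * Zc n)) * w := mw Rqp w
lemma WZp (w) : Zc n * (p * w) = (p * Zc n) * w := mw RZp w
lemma WZq (w) : Zc n * (q * w) = (q * Zc n) * w := mw RZq w
lemma WrZ (w) : r * (Zc n * w) = (Zc n * r) * w := mw RrZ w
lemma Wrq (w) : r * (q * w) = (q * (Zc n * r)) * w := mw Rrq w
lemma Wrp (w) : r * (p * w) = (p * (q * (Zc n * r))) * w := mw Rrp w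
lemma Wpx (w) : p * (x * w) = (x * (p * q)) * w := mw Rpx w
lemma Wqx (w) : q * (x * w) = (x * p) * w := mw Rqx w
lemma WZx (w) : Zc n * (x * w) = (x * Zc n) * w := mw RZx w
lemma Wrx (w) : r * (x * w) = (x ^ (3^n - 1) * r) * w := mw Rrx w
lemma Wpxm (w) : p * (x ^ (3^n - 1) * w) = (x ^ (3^n - 1) * q) * w := mw Rpxm w
lemma Wqxm (w) : q * (x ^ (3^n - 1) * w) = (x ^ (3^n - 1) * (p * q)) * w := mw Rqxm w
lemma WZxm (w) : Zc n * (x ^ (3^n - 1) * w) = (x ^ (3^n - 1) * Zc n) * w := mw RZxm w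
lemma Wxk (k : ℕ) (w) : x ^ k * (x * w) = x ^ (k+1) * w := mw (Rxk k) w
lemma Wxkj (k j : ℕ) (w) : x ^ k * (x ^ j * w) = x ^ (k+j) * w := mw (Rxkj k j) w

def pe (n : ℕ) (a : Bool) : Ostar n := cond a (gp n) 1
def qe (n : ℕ) (b : Bool) : Ostar n := cond b (gq n) 1
def ze (n : ℕ) (c : Bool) : Ostar n := cond c (Zc n) 1
def re (n : ℕ) (e : Bool) : Ostar n := cond e (gr n) 1

def nf (n : ℕ) (k : ℕ) (a b c e : Bool) : Ostar n :=
  gx n ^ k * (pe n a * (qe n b * (ze n c * re n e)))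

lemma nf_r (k : ℕ) (a b c e : Bool) :
    nf n k a b c e * r = nf n k a b (xor c e) (!e) := by
  cases a <;> cases b <;> cases c <;> cases e <;>
    simp only [nf, pe, qe, ze, re, cond_true, cond_false, one_mul, mul_one, mul_assoc,
      Wpp, Wqq, Wrr, WZZ, Wqp, WZp, WZq, WrZ, Wrq, Wrp, Wpx, Wqx, WZx, Wrx, Wpxm, Wqxm, WZxm,
      Wxk, Wxkj, Rpp, Rqq, Rrr, RZZ, Rqp, RZp, RZq, RrZ, Rrq, Rrp, Rpx, Rqx, RZx, Rrx,
      Rpxm, Rqxm, RZxm, Rxk, Rxkj, Bool.xor_false, Bool.xor_true, Bool.not_true, Bool.not_false]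

lemma nf_q (k : ℕ) (a b c e : Bool) :
    nf n k a b c e * q = nf n k a (!b) (xor c (xor b e)) e := by
  cases a <;> cases b <;> cases c <;> cases e <;>
    simp only [nf, pe, qe, ze, re, cond_true, cond_false, one_mul, mul_one, mul_assoc,
      Wpp, Wqq, Wrr, WZZ, Wqp, WZp, WZq, WrZ, Wrq, Wrp, Wpx, Wqx, WZx, Wrx, Wpxm, Wqxm, WZxm,
      Wxk, Wxkj, Rpp, Rqq, Rrr, RZZ, Rqp, RZp, RZq, RrZ, Rrq, Rrp, Rpx, Rqx, RZx, Rrx,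
      Rpxm, Rqxm, RZxm, Rxk, Rxkj, Bool.xor_false, Bool.xor_true, Bool.not_true, Bool.not_false]

lemma nf_p (k : ℕ) (a b c e : Bool) :
    nf n k a b c e * p = nf n k (!a) (xor b e) (xor c (xor a (e || b))) e := by
  cases a <;> cases b <;> cases c <;> cases e <;>
    simp only [nf, pe, qe, ze, re, cond_true, cond_false, one_mul, mul_one, mul_assoc,
      Wpp, Wqq, Wrr, WZZ, Wqp, WZp, WZq, WrZ, Wrq, Wrp, Wpx, Wqx, WZx, Wrx, Wpxm, Wqxm, WZxm,
      Wxk, Wxkj, Rpp, Rqq, Rrr, RZZ, Rqp, RZp, RZq, RrZ, Rrq, Rrp, Rpx, Rqx, RZx, Rrx,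
      Rpxm, Rqxm, RZxm, Rxk, Rxkj, Bool.xor_false, Bool.xor_true, Bool.not_true, Bool.not_false,
      Bool.false_or, Bool.true_or]

lemma nf_x_ff (k : ℕ) (a b c : Bool) :
    nf n k a b c false * x = nf n (k+1) (xor a b) a c false := by
  cases a <;> cases b <;> cases c <;>
    simp only [nf, pe, qe, ze, re, cond_true, cond_false, one_mul, mul_one, mul_assoc,
      Wpp, Wqq, Wrr, WZZ, Wqp, WZp, WZq, WrZ, Wrq, Wrp, Wpx, Wqx, WZx, Wrx, Wpxm, Wqxm, WZxm,
      Wxk, Wxkj, Rpp, Rqq, Rrr, RZZ, Rqp, RZp, RZq, RrZ, Rrq, Rrp, Rpx, Rqx, RZx, Rrx,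
      Rpxm, Rqxm, RZxm, Rxk, Rxkj, Bool.xor_false, Bool.xor_true, Bool.not_true, Bool.not_false, Bool.false_xor, Bool.true_xor]

lemma nf_x_tt (k : ℕ) (a b c : Bool) :
    nf n k a b c true * x = nf n (k + (3^n - 1)) b (xor a b) c true := by
  cases a <;> cases b <;> cases c <;>
    simp only [nf, pe, qe, ze, re, cond_true, cond_false, one_mul, mul_one, mul_assoc,
      Wpp, Wqq, Wrr, WZZ, Wqp, WZp, WZq, WrZ, Wrq, Wrp, Wpx, Wqx, WZx, Wrx, Wpxm, Wqxm, WZxm,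
      Wxk, Wxkj, Rpp, Rqq, Rrr, RZZ, Rqp, RZp, RZq, RrZ, Rrq, Rrp, Rpx, Rqx, RZx, Rrx,
      Rpxm, Rqxm, RZxm, Rxk, Rxkj, Bool.xor_false, Bool.xor_true, Bool.not_true, Bool.not_false, Bool.false_xor, Bool.true_xor]

/-! every element has a normal form -/

def IsNF (g : Ostar n) : Prop := ∃ k a b c e, g = nf n k a b c e

lemma isNF_one : IsNF (1 : Ostar n) :=
  ⟨0, false, false, false, false, by simp [nf, pe, qe, ze, re]⟩

lemma isNF_mul_p {g : Ostar n} (h : IsNF g) : IsNF (g * p) := by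
  obtain ⟨k, a, b, c, e, rfl⟩ := h
  exact ⟨_, _, _, _, _, nf_p k a b c e⟩

lemma isNF_mul_q {g : Ostar n} (h : IsNF g) : IsNF (g * q) := by
  obtain ⟨k, a, b, c, e, rfl⟩ := h
  exact ⟨_, _, _, _, _, nf_q k a b c e⟩

lemma isNF_mul_r {g : Ostar n} (h : IsNF g) : IsNF (g * r) := by
  obtain ⟨k, a, b, c, e, rfl⟩ := h
  exact ⟨_, _, _, _, _, nf_r k a b c e⟩

lemma isNF_mul_x {g : Ostar n} (h : IsNF g) : IsNF (g * x) := by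
  obtain ⟨k, a, b, c, e, rfl⟩ := h
  cases e
  · exact ⟨_, _, _, _, _, nf_x_ff k a b c⟩
  · exact ⟨_, _, _, _, _, nf_x_tt k a b c⟩

lemma isNF_mul_xpow {g : Ostar n} (h : IsNF g) (j : ℕ) : IsNF (g * x ^ j) := by
  induction j with
  | zero => simpa using h
  | succ j ih =>
      have : g * x ^ (j+1) = (g * x ^ j) * x := by rw [mul_assoc, pow_succ]
      rw [this]
      exact isNF_mul_x ih

lemma isNF_mul_Z {g : Ostar n} (h : IsNF g) : IsNF (g * Zc n) := by
  have : g * Zc n = (g * p) * p := by rw [Zdef, mul_assoc]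
  rw [this]; exact isNF_mul_p (isNF_mul_p h)

lemma isNF_mul_pe {g : Ostar n} (h : IsNF g) (a : Bool) : IsNF (g * pe n a) := by
  cases a
  · simpa [pe] using h
  · simpa [pe] using isNF_mul_p h

lemma isNF_mul_qe {g : Ostar n} (h : IsNF g) (b : Bool) : IsNF (g * qe n b) := by
  cases b
  · simpa [qe] using h
  · simpa [qe] using isNF_mul_q h

lemma isNF_mul_ze {g : Ostar n} (h : IsNF g) (c : Bool) : IsNF (g * ze n c) := by
  cases c
  · simpa [ze] using h
  · simpa [ze] using isNF_mul_Z h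

lemma isNF_mul_re {g : Ostar n} (h : IsNF g) (e : Bool) : IsNF (g * re n e) := by
  cases e
  · simpa [re] using h
  · simpa [re] using isNF_mul_r h

lemma isNF_mul {g g' : Ostar n} (h : IsNF g) (h' : IsNF g') : IsNF (g * g') := by
  obtain ⟨k, a, b, c, e, rfl⟩ := h'
  have : g * nf n k a b c e
      = ((((g * x ^ k) * pe n a) * qe n b) * ze n c) * re n e := by
    simp only [nf, mul_assoc]
  rw [this]
  exact isNF_mul_re (isNF_mul_ze (isNF_mul_qe (isNF_mul_pe (isNF_mul_xpow h k) a) b) c) e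

lemma isNF_inv_gen (s : OGen) : IsNF ((PresentedGroup.of s : Ostar n))⁻¹ := by
  cases s
  · -- X
    refine ⟨3^n - 1, false, false, false, false, ?_⟩
    have : (PresentedGroup.of X : Ostar n)⁻¹ = x⁻¹ := rfl
    rw [this, xinv]
    simp [nf, pe, qe, ze, re]
  · -- P
    refine ⟨0, true, false, true, false, ?_⟩
    have : (PresentedGroup.of P : Ostar n)⁻¹ = p⁻¹ := rfl
    rw [this, pinv]
    simp [nf, pe, qe, ze, re, Zdef, mul_assoc]
  · -- Q
    refine ⟨0, false, true, true, false, ?_⟩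
    have : (PresentedGroup.of Q : Ostar n)⁻¹ = q⁻¹ := rfl
    rw [this, qinv]
    simp [nf, pe, qe, ze, re, Zdef, mul_assoc]
  · -- R
    refine ⟨0, false, false, true, true, ?_⟩
    have : (PresentedGroup.of R : Ostar n)⁻¹ = r⁻¹ := rfl
    rw [this, rinv, ← Zdef, RrZ]
    simp [nf, pe, qe, ze, re, Zdef, mul_assoc]

lemma isNF_gen (s : OGen) : IsNF ((PresentedGroup.of s : Ostar n)) := by
  have h1 := isNF_one (n := n)
  cases s
  · have h := isNF_mul_x h1
    rw [one_mul] at h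
    exact h
  · have h := isNF_mul_p h1
    rw [one_mul] at h
    exact h
  · have h := isNF_mul_q h1
    rw [one_mul] at h
    exact h
  · have h := isNF_mul_r h1
    rw [one_mul] at h
    exact h

lemma isNF_all (g : Ostar n) : IsNF g := by
  induction g using PresentedGroup.induction_on with
  | H w =>
    induction w using FreeGroup.induction_on with
    | C1 => simpa using isNF_one (n := n)
    | of s => exact isNF_gen s
    | inv_of s _ =>
        show IsNF (((PresentedGroup.mk (ostarRels n)) (FreeGroup.of s))⁻¹)
        exact isNF_inv_gen s
    | mul w1 w2 h1 h2 =>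
        rw [map_mul]
        exact isNF_mul h1 h2

/-! the dihedral quotient -/

def dihGen (n : ℕ) : OGen → DihedralGroup (3^n)
  | X => .r 1
  | P => 1
  | Q => 1
  | R => .sr 0

lemma dih_rels : ∀ w ∈ ostarRels n, FreeGroup.lift (dihGen n) w = 1 := by
  intro w hw
  have sr0inv : (DihedralGroup.sr (0 : ZMod (3^n)))⁻¹ = DihedralGroup.sr 0 :=
    inv_eq_of_mul_eq_one_right (DihedralGroup.sr_mul_self 0)
  simp only [ostarRels, Set.mem_insert_iff, Set.mem_singleton_iff] at hw
  rcases hw with rfl|rfl|rfl|rfl|rfl|rfl|rfl|rfl|rfl|rfl <;>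
    simp only [map_mul, map_pow, map_inv, FreeGroup.lift_apply_of, dihGen]
  · rw [DihedralGroup.r_one_pow]
    rw [show ((3^n : ℕ) : ZMod (3^n)) = 0 from ZMod.natCast_self _]
    rfl
  all_goals
    simp [sr0inv, pow_two, DihedralGroup.sr_mul_self, DihedralGroup.sr_mul_r,
      DihedralGroup.sr_mul_sr, DihedralGroup.r_mul_r, DihedralGroup.r_mul_sr,
      ← DihedralGroup.one_def]

def dih (n : ℕ) : Ostar n →* DihedralGroup (3^n) := PresentedGroup.toGroup dih_rels

lemma dih_x : dih n x = .r 1 := PresentedGroup.toGroup.of _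
lemma dih_p : dih n p = 1 := PresentedGroup.toGroup.of _
lemma dih_q : dih n q = 1 := PresentedGroup.toGroup.of _
lemma dih_r : dih n r = .sr 0 := PresentedGroup.toGroup.of _

lemma dih_nf (k : ℕ) (a b c e : Bool) :
    dih n (nf n k a b c e) = DihedralGroup.r (k : ZMod (3^n)) * (cond e (.sr 0) 1) := by
  have hZ : dih n (Zc n) = 1 := by rw [Zdef, map_mul, dih_p, mul_one]
  cases a <;> cases b <;> cases c <;> cases e <;>
    simp [nf, pe, qe, ze, re, map_mul, map_pow, dih_x, dih_p, dih_q, dih_r, hZ,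
      DihedralGroup.r_one_pow]

/-! the matrix representation over ZMod 7 -/

def Au : (Matrix (Fin 2) (Fin 2) (ZMod 7))ˣ :=
  ⟨!![0,2;3,0], !![0,5;4,0], by decide, by decide⟩
def Bu : (Matrix (Fin 2) (Fin 2) (ZMod 7))ˣ :=
  ⟨!![4,4;1,3], !![3,3;6,4], by decide, by decide⟩
def Cu : (Matrix (Fin 2) (Fin 2) (ZMod 7))ˣ :=
  ⟨!![3,6;3,4], !![4,1;4,3], by decide, by decide⟩
def Wu : (Matrix (Fin 2) (Fin 2) (ZMod 7))ˣ :=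
  ⟨!![0,1;6,6], !![6,6;1,0], by decide, by decide⟩

def glGen : OGen → (Matrix (Fin 2) (Fin 2) (ZMod 7))ˣ
  | X => Wu
  | P => Au
  | Q => Bu
  | R => Cu

lemma gl_rels (hn : 1 ≤ n) : ∀ w ∈ ostarRels n, FreeGroup.lift glGen w = 1 := by
  intro w hw
  simp only [ostarRels, Set.mem_insert_iff, Set.mem_singleton_iff] at hw
  rcases hw with rfl|rfl|rfl|rfl|rfl|rfl|rfl|rfl|rfl|rfl <;>
    simp only [map_mul, map_pow, map_inv, FreeGroup.lift_apply_of, glGen]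
  · have h3 : Wu ^ 3 = 1 := Units.ext (by decide)
    obtain ⟨m', rfl⟩ : ∃ m', n = m' + 1 := ⟨n - 1, (Nat.succ_pred_eq_of_pos hn).symm⟩
    rw [pow_succ, pow_mul', h3, one_pow]
  · exact Units.ext (by decide)
  · exact Units.ext (by decide)
  · exact Units.ext (by decide)
  · exact Units.ext (by decide)
  · exact Units.ext (by decide)
  · exact Units.ext (by decide)
  · exact Units.ext (by decide)
  · exact Units.ext (by decide)
  · exact Units.ext (by decide)

def gl (hn : 1 ≤ n) : Ostar n →* (Matrix (Fin 2) (Fin 2) (ZMod 7))ˣ :=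
  PresentedGroup.toGroup (gl_rels hn)

lemma gl_x (hn : 1 ≤ n) : gl hn x = Wu := PresentedGroup.toGroup.of _
lemma gl_p (hn : 1 ≤ n) : gl hn p = Au := PresentedGroup.toGroup.of _
lemma gl_q (hn : 1 ≤ n) : gl hn q = Bu := PresentedGroup.toGroup.of _
lemma gl_r (hn : 1 ≤ n) : gl hn r = Cu := PresentedGroup.toGroup.of _
lemma gl_Z (hn : 1 ≤ n) : gl hn (Zc n) = Au * Au := by
  rw [Zdef, map_mul, gl_p]

/-! the center -/

lemma Zc_mem_center : Zc n ∈ Subgroup.center (Ostar n) := by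
  rw [Subgroup.mem_center_iff]
  intro g
  obtain ⟨k, a, b, c, e, rfl⟩ := isNF_all g
  have hcx : Commute (Zc n) x := RZx
  have hcp : Commute (Zc n) (pe n a) := by
    cases a
    · exact Commute.one_right _
    · exact RZp
  have hcq : Commute (Zc n) (qe n b) := by
    cases b
    · exact Commute.one_right _
    · exact RZq
  have hcz : Commute (Zc n) (ze n c) := by
    cases c
    · exact Commute.one_right _
    · exact Commute.refl _
  have hcr : Commute (Zc n) (re n e) := by
    cases e
    · exact Commute.one_right _
    · exact RrZ.symm
  have : Commute (Zc n) (nf n k a b c e) :=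
    (hcx.pow_right k).mul_right (hcp.mul_right (hcq.mul_right (hcz.mul_right hcr)))
  exact this.eq.symm

lemma Zc_ne_one (hn : 1 ≤ n) : Zc n ≠ 1 := by
  intro h
  have h2 := congrArg (gl hn) h
  rw [gl_Z, map_one] at h2
  exact absurd (congrArg Units.val h2) (by decide)

lemma central_cases (hn : 1 ≤ n) {g : Ostar n} (hg : g ∈ Subgroup.center (Ostar n)) :
    g = 1 ∨ g = Zc n := by
  have hcomm := Subgroup.mem_center_iff.mp hg
  obtain ⟨k, a, b, c, e, rfl⟩ := isNF_all g
  have h3n : 3 ≤ 3 ^ n := by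
    calc 3 = 3 ^ 1 := (pow_one 3).symm
    _ ≤ 3 ^ n := Nat.pow_le_pow_right (by norm_num) hn
  cases e
  case true =>
    exfalso
    have h1 := congrArg (dih n) (hcomm x)
    rw [map_mul, map_mul, dih_x, dih_nf] at h1
    simp only [cond_true, ← mul_assoc, DihedralGroup.r_mul_r, DihedralGroup.r_mul_sr,
      DihedralGroup.sr_mul_r, DihedralGroup.sr.injEq] at h1
    have h2 : ((2 : ℕ) : ZMod (3^n)) = 0 := by push_cast; linear_combination -h1
    rw [ZMod.natCast_eq_zero_iff] at h2
    have := Nat.le_of_dvd (by norm_num) h2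
    omega
  case false =>
    have h1 := congrArg (dih n) (hcomm r)
    rw [map_mul, map_mul, dih_r, dih_nf] at h1
    simp only [cond_false, mul_one, DihedralGroup.r_mul_sr, DihedralGroup.sr_mul_r,
      DihedralGroup.sr.injEq] at h1
    have h2 : ((2 * k : ℕ) : ZMod (3^n)) = 0 := by push_cast; linear_combination h1
    rw [ZMod.natCast_eq_zero_iff] at h2
    have cop : Nat.Coprime (3^n) 2 := Nat.Coprime.pow_left _ (by norm_num)
    have hdvd : 3^n ∣ k := cop.dvd_of_dvd_mul_left h2
    obtain ⟨t, rfl⟩ := hdvd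
    have hx1 : x ^ (3^n * t) = 1 := by rw [pow_mul, E1, one_pow]
    have hg : nf n (3^n * t) a b c false = pe n a * (qe n b * ze n c) := by
      rw [nf, hx1, one_mul]
      simp [re]
    have hA := congrArg (gl hn) (hcomm p)
    have hC := congrArg (gl hn) (hcomm r)
    rw [map_mul, map_mul, gl_p, hg] at hA
    rw [map_mul, map_mul, gl_r, hg] at hC
    rw [hg]
    cases a <;> cases b <;> cases c <;>
      simp only [pe, qe, ze, cond_true, cond_false, map_mul, map_one, gl_p, gl_q, gl_Z,
        one_mul, mul_one] at hA hC ⊢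
    · exact Or.inl trivial
    · exact Or.inr trivial
    · exact absurd (congrArg Units.val hA) (by decide)
    · exact absurd (congrArg Units.val hA) (by decide)
    · exact absurd (congrArg Units.val hC) (by decide)
    · exact absurd (congrArg Units.val hC) (by decide)
    · exact absurd (congrArg Units.val hA) (by decide)
    · exact absurd (congrArg Units.val hA) (by decide)

lemma main (hn : 1 ≤ n) :
    Nonempty ((Subgroup.center (Ostar n)) ≃* Multiplicative (ZMod 2)) := by
  have hset : (Subgroup.center (Ostar n) : Set (Ostar n)) = {1, Zc n} := by
    ext g
    constructor
    · intro hg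
      rcases central_cases hn hg with h | h
      · exact Or.inl h
      · exact Or.inr h
    · intro hg
      rcases hg with rfl | rfl
      · exact Subgroup.one_mem _
      · exact Zc_mem_center
  have hcard : Nat.card (Subgroup.center (Ostar n)) = 2 := by
    have e1 : Nat.card (Subgroup.center (Ostar n))
        = ((Subgroup.center (Ostar n) : Set (Ostar n))).ncard :=
      Nat.card_coe_set_eq _
    rw [e1, hset]
    exact Set.ncard_pair (Ne.symm (Zc_ne_one hn))
  have h2 : Nat.card (Multiplicative (ZMod 2)) = 2 := by
    simp [Nat.card_eq_fintype_card]
  exact ⟨mulEquivOfPrimeCardEq hcard h2⟩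

end OstarProof


/-- For every n ≥ 1, the center of O*ₙ is isomorphic to ℤ/2. -/
theorem center_Ostar (n : ℕ) (hn : 1 ≤ n) :
    Nonempty ((Subgroup.center (Ostar n)) ≃* Multiplicative (ZMod 2)) := by
  exact OstarProof.main hn
end

section
/- Let p be a prime with p ∉ {2, 3}, k ≥ 1, b a positive integer with gcd(b·pᵏ, 6) = 1 and gcd(b, p) = 1, and n ≥ 1. Let τ = (τ₁, τ₂) : ℤ/b × O*ₙ → (ℤ/pᵏ)ˣ be a homomorphism such that the kernel of the restriction τ₂ : O*ₙ → (ℤ/pᵏ)ˣ equals the index-2 subgroup T*ₙ of O*ₙ generated by X, P, Q. Let q : ℤ/b × O*ₙ → ℤ/b × ℤ/2 be the homomorphism which is the identity on the first factor and the quotient map O*ₙ → O*ₙ/T*ₙ ≅ ℤ/2 on the second, and let τ̄ : ℤ/b × ℤ/2 → (ℤ/pᵏ)ˣ be the homomorphism induced by τ. Then precomposition with q gives an isomorphism Der_{τ̄}(ℤ/b × ℤ/2, ℤ/pᵏ) ≅ Der_τ(ℤ/b × O*ₙ, ℤ/pᵏ). -/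
/-- A homomorphism `γ : H → (ℤ/a)ˣ` regarded as an action of `H` on `ℤ/a`
by multiplication. -/
def unitsAction {H : Type*} [Group H] {a : ℕ} (γ : H →* (ZMod a)ˣ) :
    H →* Multiplicative (AddAut (ZMod a)) :=
  (DistribMulAction.toAddAut (ZMod a)ˣ (ZMod a)).comp γ

/- ### Auxiliary lemmas -/

lemma ostar_rel_holds {n : ℕ} {r : FreeGroup OGen} (hr : r ∈ ostarRels n) :
    (QuotientGroup.mk r : Ostar n) = 1 :=
  (QuotientGroup.eq_one_iff r).mpr (Subgroup.subset_normalClosure hr)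

lemma ostar_X_pow (n : ℕ) : (PresentedGroup.of OGen.X : Ostar n) ^ 3 ^ n = 1 := by
  have := ostar_rel_holds (n := n) (r := FreeGroup.of OGen.X ^ 3 ^ n) (by simp [ostarRels])
  exact this

lemma ostar_P_pow (n : ℕ) : (PresentedGroup.of OGen.P : Ostar n) ^ 4 = 1 := by
  have := ostar_rel_holds (n := n) (r := FreeGroup.of OGen.P ^ 4) (by simp [ostarRels])
  exact this

lemma ostar_Q_sq (n : ℕ) :
    (PresentedGroup.of OGen.Q : Ostar n) ^ 2 = (PresentedGroup.of OGen.P : Ostar n) ^ 2 := by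
  have := ostar_rel_holds (n := n)
    (r := FreeGroup.of OGen.P ^ 2 * (FreeGroup.of OGen.Q ^ 2)⁻¹) (by simp [ostarRels])
  have h : (PresentedGroup.of OGen.P : Ostar n) ^ 2 *
      ((PresentedGroup.of OGen.Q : Ostar n) ^ 2)⁻¹ = 1 := by exact this
  rw [mul_inv_eq_one] at h
  exact h.symm

lemma der_one {H A : Type*} [Group H] [AddCommGroup A] {α : H →* Multiplicative (AddAut A)} {d : H → A}
    (hd : d ∈ Der α) : d 1 = 0 := by
  have := hd 1 1
  simp only [mul_one, map_one, toAdd_one, AddAut.zero_apply] at this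
  exact (left_eq_add.mp this)

lemma der_pow {H A : Type*} [Group H] [AddCommGroup A] {α : H →* Multiplicative (AddAut A)} {d : H → A}
    (hd : d ∈ Der α) {g : H} (hg : α g = 1) (m : ℕ) : d (g ^ m) = m • d g := by
  induction m with
  | zero => simpa using der_one hd
  | succ m ih =>
      have h : d (g ^ m * g) = d (g ^ m) + (α (g ^ m)).toAdd (d g) := hd _ _
      rw [← pow_succ] at h
      rw [h, map_pow, hg, one_pow, toAdd_one, AddAut.zero_apply, ih, succ_nsmul]

lemma unitsAction_apply {H : Type*} [Group H] {a : ℕ} (γ : H →* (ZMod a)ˣ) (g : H)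
    (x : ZMod a) : (unitsAction γ g).toAdd x = (γ g : ZMod a) * x := rfl

lemma unitsAction_eq_one {H : Type*} [Group H] {a : ℕ} {γ : H →* (ZMod a)ˣ} {g : H}
    (h : γ g = 1) : unitsAction γ g = 1 := by
  rw [unitsAction, MonoidHom.comp_apply, h, map_one]

/-- Main theorem. -/
theorem der_iso_of_ker_eq_Tstar (p : ℕ) (hp : p.Prime) (hp2 : p ≠ 2) (hp3 : p ≠ 3)
    (k : ℕ) (hk : 1 ≤ k) (b : ℕ) (hb : 0 < b) (h6 : Nat.gcd (b * p ^ k) 6 = 1)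
    (hbp : Nat.Coprime b p) (n : ℕ) (hn : 1 ≤ n)
    (τ : Multiplicative (ZMod b) × Ostar n →* (ZMod (p ^ k))ˣ)
    (hker : ∀ t : Ostar n,
      τ (1, t) = 1 ↔ t ∈ Subgroup.closure {PresentedGroup.of OGen.X,
        PresentedGroup.of OGen.P, PresentedGroup.of OGen.Q})
    (q₂ : Ostar n →* Multiplicative (ZMod 2)) (hq₂ : Function.Surjective q₂)
    (hq₂ker : ∀ t : Ostar n,
      q₂ t = 1 ↔ t ∈ Subgroup.closure {PresentedGroup.of OGen.X,
        PresentedGroup.of OGen.P, PresentedGroup.of OGen.Q})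
    (τbar : Multiplicative (ZMod b) × Multiplicative (ZMod 2) →* (ZMod (p ^ k))ˣ)
    (hτbar : τbar.comp
      (MonoidHom.prodMap (MonoidHom.id (Multiplicative (ZMod b))) q₂) = τ) :
    ∃ e : Der (unitsAction τbar) ≃+ Der (unitsAction τ),
      ∀ (d : Der (unitsAction τbar)) (w : Multiplicative (ZMod b) × Ostar n),
        (e d : Multiplicative (ZMod b) × Ostar n → ZMod (p ^ k)) w =
          (d : Multiplicative (ZMod b) × Multiplicative (ZMod 2) → ZMod (p ^ k))
            (w.1, q₂ w.2) := by
  classical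
  haveI : NeZero (p ^ k) := ⟨pow_ne_zero k hp.pos.ne'⟩
  set q : Multiplicative (ZMod b) × Ostar n →*
      Multiplicative (ZMod b) × Multiplicative (ZMod 2) :=
    MonoidHom.prodMap (MonoidHom.id (Multiplicative (ZMod b))) q₂ with hqdef
  have hqeval : ∀ w : Multiplicative (ZMod b) × Ostar n, q w = (w.1, q₂ w.2) := fun w => rfl
  have hqsurj : Function.Surjective q := by
    rintro ⟨y₁, y₂⟩
    obtain ⟨t, ht⟩ := hq₂ y₂
    exact ⟨(y₁, t), by rw [hqeval]; exact Prod.ext rfl ht⟩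
  have hτq : ∀ w, τ w = τbar (q w) := fun w => (DFunLike.congr_fun hτbar w).symm
  -- units
  have hc3 : Nat.Coprime (3 ^ n) (p ^ k) :=
    ((Nat.coprime_primes Nat.prime_three hp).mpr fun h => hp3 h.symm).pow n k
  have h3 : IsUnit ((3 ^ n : ℕ) : ZMod (p ^ k)) := (ZMod.isUnit_iff_coprime _ _).mpr hc3
  have hc2 : Nat.Coprime 2 (p ^ k) :=
    Nat.Coprime.pow_right k ((Nat.coprime_primes Nat.prime_two hp).mpr fun h => hp2 h.symm)
  have h2 : IsUnit ((2 : ℕ) : ZMod (p ^ k)) := (ZMod.isUnit_iff_coprime _ _).mpr hc2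
  have h4 : IsUnit ((4 : ℕ) : ZMod (p ^ k)) := by
    have : ((4 : ℕ) : ZMod (p ^ k)) = ((2 : ℕ) : ZMod (p ^ k)) * ((2 : ℕ) : ZMod (p ^ k)) := by
      push_cast; ring
    rw [this]; exact h2.mul h2
  -- τ is trivial on the generators of T*
  have τX : τ (1, PresentedGroup.of OGen.X) = 1 :=
    (hker _).mpr (Subgroup.subset_closure (by simp))
  have τP : τ (1, PresentedGroup.of OGen.P) = 1 :=
    (hker _).mpr (Subgroup.subset_closure (by simp))
  have τQ : τ (1, PresentedGroup.of OGen.Q) = 1 :=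
    (hker _).mpr (Subgroup.subset_closure (by simp))
  -- every crossed homomorphism vanishes on {1} × T*
  have key : ∀ d' : Multiplicative (ZMod b) × Ostar n → ZMod (p ^ k),
      d' ∈ Der (unitsAction τ) → ∀ t : Ostar n,
      t ∈ Subgroup.closure {PresentedGroup.of OGen.X, PresentedGroup.of OGen.P,
        PresentedGroup.of OGen.Q} → d' (1, t) = 0 := by
    intro d' hd'
    have hpow : ∀ g : Multiplicative (ZMod b) × Ostar n, τ g = 1 → ∀ m : ℕ,
        d' (g ^ m) = m • d' g := fun g hg m => der_pow hd' (unitsAction_eq_one hg) m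
    have hXzero : d' (1, PresentedGroup.of OGen.X) = 0 := by
      have h1 : ((1 : Multiplicative (ZMod b)), PresentedGroup.of OGen.X (rels := ostarRels n))
          ^ 3 ^ n = 1 := by
        rw [Prod.pow_mk, one_pow, ostar_X_pow]; rfl
      have h := hpow _ τX (3 ^ n)
      rw [h1, der_one hd', nsmul_eq_mul] at h
      exact (h3.mul_right_eq_zero).mp (by exact_mod_cast h.symm)
    have hPzero : d' (1, PresentedGroup.of OGen.P) = 0 := by
      have h1 : ((1 : Multiplicative (ZMod b)), PresentedGroup.of OGen.P (rels := ostarRels n))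
          ^ 4 = 1 := by
        rw [Prod.pow_mk, one_pow, ostar_P_pow]; rfl
      have h := hpow _ τP 4
      rw [h1, der_one hd', nsmul_eq_mul] at h
      exact (h4.mul_right_eq_zero).mp (by exact_mod_cast h.symm)
    have hQzero : d' (1, PresentedGroup.of OGen.Q) = 0 := by
      have h1 : ((1 : Multiplicative (ZMod b)), PresentedGroup.of OGen.Q (rels := ostarRels n))
          ^ 2 = ((1 : Multiplicative (ZMod b)), PresentedGroup.of OGen.P (rels := ostarRels n))
          ^ 2 := by
        rw [Prod.pow_mk, Prod.pow_mk, ostar_Q_sq]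
      have hq := hpow _ τQ 2
      have hpp := hpow _ τP 2
      rw [h1, hpp, hPzero, smul_zero, nsmul_eq_mul] at hq
      exact (h2.mul_right_eq_zero).mp (by exact_mod_cast hq.symm)
    intro t ht
    refine Subgroup.closure_induction (p := fun t _ => d' (1, t) = 0) ?_ ?_ ?_ ?_ ht
    · intro x hx
      simp only [Set.mem_insert_iff, Set.mem_singleton_iff] at hx
      rcases hx with rfl | rfl | rfl
      · exact hXzero
      · exact hPzero
      · exact hQzero
    · exact der_one hd'
    · intro x y _ _ hx hy
      have : ((1 : Multiplicative (ZMod b)), x * y) =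
          ((1 : Multiplicative (ZMod b)), x) * (1, y) := by
        rw [Prod.mk_mul_mk, one_mul]
      rw [this, hd' _ _, hx, hy, map_zero, add_zero]
    · intro x _ hx
      have h1 : ((1 : Multiplicative (ZMod b)), x) * (1, x⁻¹) = 1 := by
        rw [Prod.mk_mul_mk, one_mul, mul_inv_cancel]; rfl
      have h := hd' ((1 : Multiplicative (ZMod b)), x) (1, x⁻¹)
      rw [h1, der_one hd', hx, zero_add] at h
      apply (unitsAction τ ((1 : Multiplicative (ZMod b)), x)).toAdd.injective
      rw [map_zero]
      exact h.symm
  -- crossed homomorphisms are constant on fibers of q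
  have hfib : ∀ d' : Multiplicative (ZMod b) × Ostar n → ZMod (p ^ k),
      d' ∈ Der (unitsAction τ) → ∀ g g', q g = q g' → d' g = d' g' := by
    intro d' hd' g g' hgg
    have h1 : q (g⁻¹ * g') = 1 := by rw [map_mul, map_inv, hgg, inv_mul_cancel]
    rw [hqeval, Prod.ext_iff] at h1
    have hmem := (hq₂ker (g⁻¹ * g').2).mp h1.2
    have hform : g⁻¹ * g' = ((1 : Multiplicative (ZMod b)), (g⁻¹ * g').2) :=
      Prod.ext h1.1 rfl
    have hz : d' (g⁻¹ * g') = 0 := by rw [hform]; exact key d' hd' _ hmem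
    have h2' : d' (g * (g⁻¹ * g')) = d' g + (unitsAction τ g).toAdd (d' (g⁻¹ * g')) := hd' _ _
    rw [hz, map_zero, add_zero, mul_inv_cancel_left] at h2'
    exact h2'.symm
  have hact : ∀ (w : Multiplicative (ZMod b) × Ostar n) (x : ZMod (p ^ k)),
      (unitsAction τ w).toAdd x = (unitsAction τbar (q w)).toAdd x := by
    intro w x
    rw [unitsAction_apply, unitsAction_apply, hτq]
  -- the forward homomorphism
  let F : Der (unitsAction τbar) →+ Der (unitsAction τ) :=
  { toFun := fun d => ⟨fun w => (d : _ → ZMod (p ^ k)) (q w), by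
      intro w₁ w₂
      dsimp only
      rw [map_mul, d.2 (q w₁) (q w₂), hact]⟩
    map_zero' := rfl
    map_add' := fun _ _ => rfl }
  have hFinj : Function.Injective F := by
    intro d₁ d₂ h
    apply Subtype.ext
    funext y
    obtain ⟨w, rfl⟩ := hqsurj y
    exact congrFun (congrArg Subtype.val h) w
  have hFsurj : Function.Surjective F := by
    intro d'
    have hs : ∀ y, q (Function.surjInv hqsurj y) = y := Function.surjInv_eq hqsurj
    refine ⟨⟨fun y => (d' : _ → ZMod (p ^ k)) (Function.surjInv hqsurj y), ?_⟩, ?_⟩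
    · intro y₁ y₂
      dsimp only
      have h1 : (d' : _ → ZMod (p ^ k)) (Function.surjInv hqsurj (y₁ * y₂)) =
          (d' : _ → ZMod (p ^ k))
            (Function.surjInv hqsurj y₁ * Function.surjInv hqsurj y₂) :=
        hfib _ d'.2 _ _ (by rw [map_mul, hs, hs, hs])
      rw [h1, d'.2 _ _, hact, hs]
    · apply Subtype.ext
      funext w
      exact hfib _ d'.2 _ _ (hs (q w))
  refine ⟨AddEquiv.ofBijective F ⟨hFinj, hFsurj⟩, fun d w => rfl⟩
end

section
/- Let n ≥ 1 and let a be a positive integer with gcd(a, 6) = 1. Then for every group homomorphism τ₂ : O*ₙ → (ℤ/a)ˣ and every automorphism φ of O*ₙ, one has τ₂ ∘ φ = τ₂; that is, Aut_{τ₂}(O*ₙ) := {φ ∈ Aut(O*ₙ) : τ₂ ∘ φ = τ₂} equals all of Aut(O*ₙ). -/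
namespace OstarAux

open OGen

lemma rel_eq_one {n : ℕ} {r : FreeGroup OGen} (hr : r ∈ ostarRels n) :
    PresentedGroup.mk (ostarRels n) r = 1 := by
  have : r ∈ Subgroup.normalClosure (ostarRels n) := Subgroup.subset_normalClosure hr
  exact (QuotientGroup.eq_one_iff r).2 this

/-- Values of a homomorphism from `Ostar n` to a commutative group on the generators. -/
lemma hom_gens {n : ℕ} {M : Type*} [CommGroup M] (f : Ostar n →* M) :
    f (.of X) = 1 ∧ f (.of P) = 1 ∧ f (.of Q) = 1 ∧ f (.of R) ^ 2 = 1 := by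
  set g : FreeGroup OGen →* M := f.comp (PresentedGroup.mk (ostarRels n)) with hg
  have hof : ∀ s : OGen, g (FreeGroup.of s) = f (.of s) := fun s => rfl
  have hrel : ∀ r ∈ ostarRels n, g r = 1 := by
    intro r hr
    have := rel_eq_one (n := n) hr
    simp [hg, MonoidHom.comp_apply, this]
  set x := f (.of X); set p := f (.of P); set q := f (.of Q); set r := f (.of R)
  have h1 : x ^ 3 ^ n = 1 := by
    have := hrel (FreeGroup.of X ^ 3 ^ n) (by left; rfl)
    simpa [hof] using this
  have h4 : q ^ 2 * (r ^ 2)⁻¹ = 1 := by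
    have := hrel (FreeGroup.of Q ^ 2 * (FreeGroup.of R ^ 2)⁻¹)
      (by right; right; right; left; rfl)
    simpa [hof] using this
  have h6 : x * p * x⁻¹ * q⁻¹ = 1 := by
    have := hrel (FreeGroup.of X * FreeGroup.of P * (FreeGroup.of X)⁻¹ * (FreeGroup.of Q)⁻¹)
      (by right; right; right; right; right; left; rfl)
    simpa [hof] using this
  have h7 : x * q * x⁻¹ * (p * q)⁻¹ = 1 := by
    have := hrel (FreeGroup.of X * FreeGroup.of Q * (FreeGroup.of X)⁻¹ *
        (FreeGroup.of P * FreeGroup.of Q)⁻¹)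
      (by right; right; right; right; right; right; left; rfl)
    simpa [hof] using this
  have h8 : r * x * r⁻¹ * x = 1 := by
    have := hrel (FreeGroup.of R * FreeGroup.of X * (FreeGroup.of R)⁻¹ * FreeGroup.of X)
      (by right; right; right; right; right; right; right; left; rfl)
    simpa [hof] using this
  -- x² = 1
  have hx2 : x * x = 1 := by
    rw [mul_right_comm r x r⁻¹, mul_inv_cancel, one_mul] at h8
    exact h8
  have hxodd : x = 1 := by
    obtain ⟨k, hk⟩ : Odd (3 ^ n) := Odd.pow ⟨1, by norm_num⟩
    have : x ^ 3 ^ n = (x * x) ^ k * x := by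
      rw [hk, pow_succ, pow_mul, pow_two]
    rw [hx2, one_pow, one_mul] at this
    rw [← this, h1]
  -- p = q, p = 1, q = 1
  rw [mul_right_comm x p x⁻¹, mul_inv_cancel, one_mul] at h6
  have hpq : p = q := mul_inv_eq_one.mp h6
  rw [mul_right_comm x q x⁻¹, mul_inv_cancel, one_mul] at h7
  have h7' : q = p * q := mul_inv_eq_one.mp h7
  have hp : p = 1 := right_eq_mul.mp h7'
  have hq : q = 1 := by rw [← hpq]; exact hp
  have hr2 : r ^ 2 = 1 := by
    have : q ^ 2 = r ^ 2 := mul_inv_eq_one.mp h4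
    rw [← this, hq, one_pow]
  exact ⟨hxodd, hp, hq, hr2⟩

/-- The parity homomorphism `ε : Ostar n →* Multiplicative (ZMod 2)`,
sending `X, P, Q ↦ 0` and `R ↦ 1`. -/
noncomputable def eps (n : ℕ) : Ostar n →* Multiplicative (ZMod 2) :=
  PresentedGroup.toGroup (f := fun s => match s with
    | R => Multiplicative.ofAdd (1 : ZMod 2)
    | _ => 1) (by
      intro r hr
      rcases hr with rfl | rfl | rfl | rfl | rfl | rfl | rfl | rfl | rfl | hr
      · simp
      · simp
      · simp
      · simp only [map_mul, map_inv, map_pow, FreeGroup.lift_apply_of]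
        decide
      · simp
      · simp
      · simp
      · simp only [map_mul, map_inv, map_pow, FreeGroup.lift_apply_of]
        decide
      · simp only [map_mul, map_inv, map_pow, FreeGroup.lift_apply_of]
        decide
      · rcases hr with rfl
        simp only [map_mul, map_inv, map_pow, FreeGroup.lift_apply_of]
        decide)

@[simp] lemma eps_R (n : ℕ) : eps n (.of R) = Multiplicative.ofAdd (1 : ZMod 2) :=
  PresentedGroup.toGroup.of _

end OstarAux

/-- Let n ≥ 1 and gcd(a,6) = 1. For every homomorphism τ₂ : O*ₙ → (ℤ/a)ˣ and every
automorphism φ of O*ₙ, one has τ₂ ∘ φ = τ₂; that is,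
Aut_{τ₂}(O*ₙ) = {φ ∈ Aut(O*ₙ) : τ₂ ∘ φ = τ₂} is all of Aut(O*ₙ). -/
theorem autFix_Ostar_eq_top (n : ℕ) (hn : 1 ≤ n) (a : ℕ) (ha : 0 < a)
    (h6 : Nat.gcd a 6 = 1) (τ₂ : Ostar n →* (ZMod a)ˣ) (φ : MulAut (Ostar n)) :
    ∀ g : Ostar n, τ₂ (φ g) = τ₂ g := by
  classical
  open OGen OstarAux in
  -- the parity homomorphism
  set ε := OstarAux.eps n with hε
  obtain ⟨hεX, hεP, hεQ, -⟩ := OstarAux.hom_gens ε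
  -- ε ∘ φ
  set εφ := ε.comp φ.toMonoidHom with hεφ
  obtain ⟨hεφX, hεφP, hεφQ, -⟩ := OstarAux.hom_gens εφ
  -- ε ∘ φ sends R to ofAdd 1
  have hεφR : εφ (.of R) = Multiplicative.ofAdd (1 : ZMod 2) := by
    by_contra hcon
    have hεφR1 : εφ (.of R) = 1 := by
      have : (εφ (.of R)).toAdd = 0 ∨ (εφ (.of R)).toAdd = 1 := by
        generalize (εφ (.of R)).toAdd = z
        revert z; decide
      rcases this with h | h
      · have := congrArg Multiplicative.ofAdd h
        simpa using this
      · exact absurd (by simpa using congrArg Multiplicative.ofAdd h) hcon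
    -- then εφ is trivial
    have htriv : εφ = 1 := by
      apply PresentedGroup.ext
      intro s
      cases s <;> simp [hεφX, hεφP, hεφQ, hεφR1]
    -- but εφ is surjective
    have hsurj : Function.Surjective εφ := by
      have hs : Function.Surjective ε := by
        intro m
        have : m.toAdd = 0 ∨ m.toAdd = 1 := by
          generalize m.toAdd = z; revert z; decide
        rcases this with h | h
        · exact ⟨1, by rw [map_one]; rw [← ofAdd_toAdd m, h]; rfl⟩
        · exact ⟨.of R, by rw [hε, OstarAux.eps_R, ← ofAdd_toAdd m, h]⟩
      exact hs.comp φ.surjective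
    obtain ⟨g, hg⟩ := hsurj (Multiplicative.ofAdd (1 : ZMod 2))
    rw [htriv] at hg
    simp at hg
    exact absurd hg.symm (by decide)
  -- τ₂ factors through ε
  obtain ⟨hτX, hτP, hτQ, hτR2⟩ := OstarAux.hom_gens τ₂
  set u := τ₂ (.of R) with hu
  -- the lift ι : Multiplicative (ZMod 2) →* (ZMod a)ˣ with ι(ofAdd 1) = u
  have hu2 : (2 : ℤ) • Additive.ofMul u = 0 := by
    have : u ^ (2 : ℤ) = 1 := by rw [zpow_two, ← pow_two, hτR2]
    simpa [← ofMul_zpow] using congrArg Additive.ofMul this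
  set ι' : ZMod 2 →+ Additive (ZMod a)ˣ :=
    ZMod.lift 2 ⟨zmultiplesHom (Additive (ZMod a)ˣ) (Additive.ofMul u), by simpa using hu2⟩
      with hι'
  set ι : Multiplicative (ZMod 2) →* (ZMod a)ˣ := AddMonoidHom.toMultiplicativeLeft ι' with hι
  have hι1 : ι (Multiplicative.ofAdd (1 : ZMod 2)) = u := by
    have h1 : ι' ((1 : ℤ) : ZMod 2) = Additive.ofMul u := by
      rw [hι', ZMod.lift_coe]
      simp
    have : ι' (1 : ZMod 2) = Additive.ofMul u := by
      have : ((1 : ℤ) : ZMod 2) = (1 : ZMod 2) := by norm_num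
      rwa [this] at h1
    simp [hι, AddMonoidHom.coe_toMultiplicativeLeft, this]
  have hfactor : τ₂ = ι.comp ε := by
    apply PresentedGroup.ext
    intro s
    cases s
    · simp [hτX, hεX]
    · simp [hτP, hεP]
    · simp [hτQ, hεQ]
    · show τ₂ (.of R) = ι (ε (.of R))
      rw [hε, OstarAux.eps_R, hι1]
  -- ε ∘ φ = ε
  have hεφ_eq : εφ = ε := by
    apply PresentedGroup.ext
    intro s
    cases s
    · simp [hεφX, hεX]
    · simp [hεφP, hεP]
    · simp [hεφQ, hεQ]
    · show εφ (.of R) = ε (.of R)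
      rw [hεφR, hε, OstarAux.eps_R]
  intro g
  have h1 : τ₂ (φ g) = ι (ε (φ g)) := by rw [hfactor]; rfl
  have h2 : ε (φ g) = ε g := by
    have := congrArg (fun f : Ostar n →* Multiplicative (ZMod 2) => f g) hεφ_eq
    simpa [hεφ, MonoidHom.comp_apply] using this
  rw [h1, h2, hfactor]; rfl
end
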